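/- arXiv:2107.13069 — 8 statements merged into one kernel-verified Lean document; each statement's English description precedes it below -/
import Mathlib

section
/- Let λ, μ ∈ ℤ^k be root-conjugate, i.e. λ − μ = e_a − e_b for some a ≠ b and μ is obtained from λ by swapping coordinates a and b. Then λ and μ are not W-sortable: there is no permutation w of [k] such that both λ_{w(1)} ≥ λ_{w(2)} ≥ ⋯ ≥ λ_{w(k)} and μ_{w(1)} ≥ μ_{w(2)} ≥ ⋯ ≥ μ_{w(k)} hold. -/
/-- The standard basis vector `e_a` of `ℤ^k`. -/
def stdBasis (k : ℕ) (a : Fin k) : Fin k → ℤ := fun i => if i = a then 1 else 0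

/-- A pair of vectors is `W`-sortable if some permutation of the coordinates
makes both weakly decreasing. -/
def WSortable {k : ℕ} (l m : Fin k → ℤ) : Prop :=
  ∃ w : Equiv.Perm (Fin k),
    (∀ i j : Fin k, i ≤ j → l (w j) ≤ l (w i)) ∧ (∀ i j : Fin k, i ≤ j → m (w j) ≤ m (w i))

/-- Two vectors are root-conjugate if they differ by a root `e_a - e_b` (`a ≠ b`)
and are interchanged by the coordinate transposition `(a b)`. -/
def RootConjugate {k : ℕ} (l m : Fin k → ℤ) : Prop :=
  ∃ a b : Fin k, a ≠ b ∧ (∀ i, l i - m i = stdBasis k a i - stdBasis k b i) ∧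
    (∀ i, m i = l (Equiv.swap a b i))

/-- A root-conjugate pair of vectors is never `W`-sortable. -/
theorem stmt0 {k : ℕ} (l m : Fin k → ℤ) (h : RootConjugate l m) : ¬ WSortable l m := by
  rintro ⟨w, h1, h2⟩
  obtain ⟨a, b, hab, hdiff, hswap⟩ := h
  have hma : m a = l b := by rw [hswap a, Equiv.swap_apply_left]
  have hmb : m b = l a := by rw [hswap b, Equiv.swap_apply_right]
  have hda := hdiff a
  simp [stdBasis, hab, hab.symm] at hda
  -- hda : l a - m a = 1
  have hlab : l b < l a := by omega
  have hmab : m a < m b := by rw [hma, hmb]; exact hlab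
  rcases le_total (w.symm a) (w.symm b) with hpq | hpq
  · have := h2 _ _ hpq
    simp only [Equiv.apply_symm_apply] at this
    exact absurd this (not_le.mpr hmab)
  · have := h1 _ _ hpq
    simp only [Equiv.apply_symm_apply] at this
    exact absurd this (not_le.mpr hlab)
end

section
/- Let λ, μ, σ ∈ ℤ^k be three distinct vectors that are pairwise compatible (each pair is either W-sortable or root-conjugate). If λ and μ are root-conjugate and μ and σ are root-conjugate, then λ and σ are root-conjugate. In other words, root-conjugacy is a transitive relation on any set of pairwise compatible vectors. -/
/-- Two vectors are compatible if they are `W`-sortable or root-conjugate. -/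
def Compatible {k : ℕ} (l m : Fin k → ℤ) : Prop := WSortable l m ∨ RootConjugate l m

/-- Value-level extraction from root-conjugacy. -/
lemma rc_values {k : ℕ} {l m : Fin k → ℤ} (h : RootConjugate l m) :
    ∃ a b : Fin k, a ≠ b ∧ m a = l b ∧ m b = l a ∧ l a = l b + 1 ∧
      ∀ i, i ≠ a → i ≠ b → m i = l i := by
  obtain ⟨a, b, hab, h1, h2⟩ := h
  have ea := h1 a
  have ma : m a = l b := by rw [h2 a, Equiv.swap_apply_left]
  have mb : m b = l a := by rw [h2 b, Equiv.swap_apply_right]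
  refine ⟨a, b, hab, ma, mb, ?_, ?_⟩
  · simp only [stdBasis, if_true, eq_self_iff_true] at ea
    rw [if_neg hab] at ea
    omega
  · intro i hia hib
    rw [h2 i, Equiv.swap_apply_of_ne_of_ne hia hib]

/-- Value-level construction of root-conjugacy. -/
lemma rc_of_values {k : ℕ} {l m : Fin k → ℤ} (a b : Fin k) (hab : a ≠ b)
    (ma : m a = l b) (mb : m b = l a) (hv : l a = l b + 1)
    (ho : ∀ i, i ≠ a → i ≠ b → m i = l i) : RootConjugate l m := by
  refine ⟨a, b, hab, ?_, ?_⟩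
  · intro i
    simp only [stdBasis]
    by_cases hia : i = a
    · rw [if_pos hia, if_neg (hia ▸ hab), hia]
      omega
    · by_cases hib : i = b
      · rw [if_neg hia, if_pos hib, hib]
        omega
      · rw [if_neg hia, if_neg hib, ho i hia hib]
        omega
  · intro i
    by_cases hia : i = a
    · subst hia; rw [Equiv.swap_apply_left]; exact ma
    · by_cases hib : i = b
      · subst hib; rw [Equiv.swap_apply_right]; exact mb
      · rw [Equiv.swap_apply_of_ne_of_ne hia hib]; exact ho i hia hib

/-- A pair with strict inequalities in opposite directions is not `W`-sortable. -/
lemma ws_kill {k : ℕ} {l s : Fin k → ℤ} (h : WSortable l s) {x y : Fin k}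
    (h1 : l y < l x) (h2 : s x < s y) : False := by
  obtain ⟨w, hl, hs⟩ := h
  rcases le_total (w.symm x) (w.symm y) with hxy | hxy
  · have := hs _ _ hxy
    simp only [Equiv.apply_symm_apply] at this
    omega
  · have := hl _ _ hxy
    simp only [Equiv.apply_symm_apply] at this
    omega

/-- On a set of pairwise compatible vectors, root-conjugacy is transitive. -/
theorem stmt3 {k : ℕ} (l m s : Fin k → ℤ)
    (hlm : l ≠ m) (hms : m ≠ s) (hls : l ≠ s)
    (clm : Compatible l m) (cms : Compatible m s) (cls : Compatible l s)
    (rlm : RootConjugate l m) (rms : RootConjugate m s) :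
    RootConjugate l s := by
  obtain ⟨a, b, hab, ma, mb, lab, mo⟩ := rc_values rlm
  obtain ⟨c, d, hcd, sc, sd, mcd, so⟩ := rc_values rms
  by_cases hca : c = a
  · rw [hca] at hcd sc sd mcd so
    by_cases hdb : d = b
    · -- (c,d)=(a,b): contradiction in values
      rw [hdb] at sc sd mcd
      exfalso; omega
    · -- c = a, d ∉ {a,b}: contradiction with compatibility of l and s
      exfalso
      have hda : d ≠ a := fun h => hcd h.symm
      have hmd : m d = l d := mo d hda hdb
      have hsa : s a = l d := by rw [sc, hmd]
      have hsd : s d = l b := by rw [sd, ma]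
      have hsb : s b = l a := by
        rw [so b (fun h => hab h.symm) (fun h => hdb h.symm)]; exact mb
      have hlb : l b = l d + 1 := by omega
      rcases cls with hw | hr
      · exact ws_kill hw (x := a) (y := b) (by omega) (by omega)
      · obtain ⟨a', b', hab', sa', sb', lab', so'⟩ := rc_values hr
        by_cases h1 : a = a'
        · rw [← h1] at sa' lab'; omega
        · by_cases h2 : a = b'
          · rw [← h2] at sb' lab'; omega
          · have := so' a h1 h2; omega
  · by_cases hcb : c = b
    · rw [hcb] at hcd sc sd mcd so
      by_cases hda : d = a
      · -- (c,d)=(b,a): then s = l, contradiction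
        rw [hda] at hcd sc sd mcd so
        exfalso
        apply hls
        funext i
        by_cases hia : i = a
        · rw [hia, sd, mb]
        · by_cases hib : i = b
          · rw [hib, sc, ma]
          · rw [so i hib hia, mo i hia hib]
      · -- c = b, d ∉ {a,b}: root-conjugate via (a,d)
        have hda' : a ≠ d := fun h => hda h.symm
        have hdb : d ≠ b := fun h => hcd h.symm
        have hmd : m d = l d := mo d hda hdb
        have key : l a = l d + 1 := by omega
        refine rc_of_values a d hda' ?_ ?_ key ?_
        · rw [so a hab hda', ma]; omega
        · rw [sd, mb]
        · intro i hia hid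
          by_cases hib : i = b
          · rw [hib, sc, hmd]; omega
          · rw [so i hib hid, mo i hia hib]
    · by_cases hda : d = a
      · -- d = a, c ∉ {a,b}: root-conjugate via (c,b)
        rw [hda] at hcd sc sd mcd so
        have hmc : m c = l c := mo c hca hcb
        have key : l c = l b + 1 := by omega
        refine rc_of_values c b hcb ?_ ?_ key ?_
        · rw [sc, ma]
        · rw [so b (fun h => hcb h.symm) (fun h => hab h.symm), mb]; omega
        · intro i hic hib
          by_cases hia : i = a
          · rw [hia, sd]; omega
          · rw [so i hic hia, mo i hia hib]
      · by_cases hdb : d = b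
        · -- d = b, c ∉ {a,b}: contradiction with compatibility of l and s
          rw [hdb] at hcd sc sd mcd so
          exfalso
          have hmc : m c = l c := mo c hca hcb
          have hlc : l c = l b + 2 := by omega
          have hsc : s c = l a := by rw [sc, mb]
          have hsb : s b = l c := by rw [sd, hmc]
          rcases cls with hw | hr
          · exact ws_kill hw (x := c) (y := b) (by omega) (by omega)
          · obtain ⟨a', b', hab', sa', sb', lab', so'⟩ := rc_values hr
            by_cases h1 : b = a'
            · rw [← h1] at sa' lab'; omega
            · by_cases h2 : b = b'
              · rw [← h2] at sb' lab'; omega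
              · have := so' b h1 h2; omega
        · -- {a,b} and {c,d} disjoint: contradiction with compatibility of l and s
          exfalso
          have hmc : m c = l c := mo c hca hcb
          have hmd : m d = l d := mo d hda hdb
          have hlcd : l c = l d + 1 := by omega
          have hsa : s a = l b := by
            rw [so a (fun h => hca h.symm) (fun h => hda h.symm)]; exact ma
          have hsb : s b = l a := by
            rw [so b (fun h => hcb h.symm) (fun h => hdb h.symm)]; exact mb
          have hsc : s c = l d := by rw [sc, hmd]
          rcases cls with hw | hr
          · exact ws_kill hw (x := a) (y := b) (by omega) (by omega)
          · obtain ⟨a', b', hab', sa', sb', lab', so'⟩ := rc_values hr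
            have fa : a = a' := by
              by_cases h1 : a = a'
              · exact h1
              · exfalso
                by_cases h2 : a = b'
                · rw [← h2] at sb' lab'; omega
                · have := so' a h1 h2; omega
            have fc : c = a' := by
              by_cases h1 : c = a'
              · exact h1
              · exfalso
                by_cases h2 : c = b'
                · rw [← h2] at sb' lab'; omega
                · have := so' c h1 h2; omega
            exact hca (fc.trans fa.symm)
end

section
/- Let C be a finite family of vectors in ℤ^k such that every pair of vectors in C is W-sortable (there is a permutation simultaneously weakly sorting both). Then there exists a single permutation w of [k] such that every vector λ ∈ C satisfies λ_{w(1)} ≥ λ_{w(2)} ≥ ⋯ ≥ λ_{w(k)}. -/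
/-- Flagness of the type `A` Coxeter complex: if every pair of vectors in a finite family
is `W`-sortable, then a single permutation simultaneously sorts all of them. -/
theorem stmt4 {k : ℕ} (C : Finset (Fin k → ℤ))
    (h : ∀ l ∈ C, ∀ m ∈ C, l ≠ m → WSortable l m) :
    ∃ w : Equiv.Perm (Fin k), ∀ l ∈ C, ∀ i j : Fin k, i ≤ j → l (w j) ≤ l (w i) := by
  classical
  -- `a ≼ b` means `∀ l ∈ C, l b ≤ l a`.  This is total by pairwise sortability.
  have total : ∀ a b : Fin k, (∀ l ∈ C, l b ≤ l a) ∨ (∀ l ∈ C, l a ≤ l b) := by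
    intro a b
    by_contra hc
    push_neg at hc
    obtain ⟨⟨l, hl, hlab⟩, ⟨m, hm, hmba⟩⟩ := hc
    rcases eq_or_ne l m with rfl | hne
    · exact absurd hlab (not_lt.2 hmba.le)
    · obtain ⟨w, hw1, hw2⟩ := h l hl m hm hne
      rcases le_total (w.symm a) (w.symm b) with hle | hle
      · have := hw1 (w.symm a) (w.symm b) hle
        simp only [Equiv.apply_symm_apply] at this
        exact absurd hlab (not_lt.2 this)
      · have := hw2 (w.symm b) (w.symm a) hle
        simp only [Equiv.apply_symm_apply] at this
        exact absurd hmba (not_lt.2 this)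
  set f : Fin k → ℕ := fun a => (Finset.univ.filter (fun c => ∀ l ∈ C, l a ≤ l c)).card with hf
  -- Key: if `f a ≤ f b` then `∀ l ∈ C, l b ≤ l a`.
  have key : ∀ a b : Fin k, f a ≤ f b → ∀ l ∈ C, l b ≤ l a := by
    intro a b hab
    by_contra hc
    push_neg at hc
    obtain ⟨l, hl, hlt⟩ := hc
    -- so ¬(a ≼ b); by totality, b ≼ a, i.e. ∀ l, l a ≤ l b
    have hba : ∀ m ∈ C, m a ≤ m b := by
      rcases total a b with h1 | h1
      · exact absurd (h1 l hl) (not_le.2 hlt)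
      · exact h1
    -- then the set defining f b is strictly inside the one defining f a
    have hsub : (Finset.univ.filter (fun c => ∀ m ∈ C, m b ≤ m c)) ⊂
        (Finset.univ.filter (fun c => ∀ m ∈ C, m a ≤ m c)) := by
      constructor
      · intro c hc
        simp only [Finset.mem_filter, Finset.mem_univ, true_and] at hc ⊢
        exact fun m hm => (hba m hm).trans (hc m hm)
      · intro hsub'
        have ha : a ∈ Finset.univ.filter (fun c => ∀ m ∈ C, m a ≤ m c) := by
          simp only [Finset.mem_filter, Finset.mem_univ, true_and]
          exact fun m _ => le_refl _
        have := hsub' ha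
        simp only [Finset.mem_filter, Finset.mem_univ, true_and] at this
        exact absurd (this l hl) (not_le.2 hlt)
    have : f b < f a := Finset.card_lt_card hsub
    omega
  refine ⟨Tuple.sort f, fun l hl i j hij => ?_⟩
  have := Tuple.monotone_sort f hij
  exact key _ _ this l hl
end

section
/- Let C be a finite multiset of pairwise compatible vectors in ℤ^k that is basic (every vector that is root-conjugate to some other element of C appears with multiplicity one). Partition C into root-conjugacy classes (each non-root-conjugate vector is a singleton class) and for each class O let its class sum be Σ_{λ∈O} λ ∈ ℤ^k. Then the collection of class sums is pairwise W-sortable. -/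
open scoped Classical

/-- A multiset is basic if every vector root-conjugate to some member of the multiset
appears with multiplicity one. -/
def Basic {k : ℕ} (C : Multiset (Fin k → ℤ)) : Prop :=
  ∀ l ∈ C, (∃ m ∈ C, RootConjugate l m) → C.count l = 1

/-- The class sum of the root-conjugacy class of `l` in `C`: the sum of `l` together
with all members of `C` root-conjugate to it (each root-conjugate member occurs once). -/
noncomputable def classSum {k : ℕ} (C : Multiset (Fin k → ℤ)) (l : Fin k → ℤ) : Fin k → ℤ :=
  ∑ m ∈ C.toFinset.filter (fun m => m = l ∨ RootConjugate l m), m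

/- ### Auxiliary lemmas -/

/-- Normal form for root-conjugacy. -/
lemma rc_iff {k : ℕ} {x y : Fin k → ℤ} : RootConjugate x y ↔
    ∃ a b : Fin k, a ≠ b ∧ x a = x b + 1 ∧
      ∀ t, y t = x t - (if t = a then 1 else 0) + (if t = b then 1 else 0) := by
  constructor
  · rintro ⟨a, b, hab, hd, hs⟩
    refine ⟨a, b, hab, ?_, ?_⟩
    · have h1 : x a - y a = (if a = a then 1 else 0) - (if a = b then 1 else 0) := hd a
      have h2 : y a = x b := by rw [hs a, Equiv.swap_apply_left]
      split_ifs at h1 <;> first | omega | simp_all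
    · intro t
      have h1 : x t - y t = (if t = a then 1 else 0) - (if t = b then 1 else 0) := hd t
      omega
  · rintro ⟨a, b, hab, hv, hy⟩
    refine ⟨a, b, hab, ?_, ?_⟩
    · intro t
      show x t - y t = (if t = a then 1 else 0) - (if t = b then 1 else 0)
      have := hy t
      omega
    · intro t
      rw [Equiv.swap_apply_def]
      split_ifs with h1 h2
      · subst h1
        have h3 := hy t
        have h4 := hy b
        split_ifs at h3 h4 <;> first | omega | simp_all
      · subst h2
        have h3 := hy t
        have h4 := hy a
        split_ifs at h3 h4 <;> first | omega | simp_all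
      · have h3 := hy t
        split_ifs at h3 <;> first | omega | simp_all

/-- A `W`-sortable pair has no conflict. -/
lemma wsortable_no_conf {k : ℕ} {x y : Fin k → ℤ} (h : WSortable x y) {i j : Fin k}
    (h1 : x i < x j) (h2 : y j < y i) : False := by
  obtain ⟨w, hw1, hw2⟩ := h
  rcases le_total (w.symm i) (w.symm j) with hle | hle
  · have := hw1 _ _ hle
    rw [Equiv.apply_symm_apply, Equiv.apply_symm_apply] at this
    omega
  · have := hw2 _ _ hle
    rw [Equiv.apply_symm_apply, Equiv.apply_symm_apply] at this
    omega

/-- A conflict-free pair is `W`-sortable. -/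
lemma wsortable_of_no_conf {k : ℕ} {x y : Fin k → ℤ}
    (h : ∀ i j : Fin k, x i < x j → y j < y i → False) : WSortable x y := by
  classical
  set g : Fin k → ℤ ×ₗ ℤ := fun t => toLex (-(x t), -(y t)) with hg
  refine ⟨Tuple.sort g, ?_, ?_⟩
  · intro i j hij
    have h2 := Tuple.monotone_sort g hij
    have h3 : toLex (-(x (Tuple.sort g i)), -(y (Tuple.sort g i))) ≤
        toLex (-(x (Tuple.sort g j)), -(y (Tuple.sort g j))) := h2
    rw [Prod.Lex.le_iff] at h3
    rcases h3 with h3 | h3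
    · have h3' : -(x (Tuple.sort g i)) < -(x (Tuple.sort g j)) := h3
      omega
    · have h4 : -(x (Tuple.sort g i)) = -(x (Tuple.sort g j)) := h3.1
      omega
  · intro i j hij
    have h2 := Tuple.monotone_sort g hij
    have h3 : toLex (-(x (Tuple.sort g i)), -(y (Tuple.sort g i))) ≤
        toLex (-(x (Tuple.sort g j)), -(y (Tuple.sort g j))) := h2
    rw [Prod.Lex.le_iff] at h3
    rcases h3 with h3 | h3
    · have h4 : -(x (Tuple.sort g i)) < -(x (Tuple.sort g j)) := h3
      have hx : x (Tuple.sort g j) < x (Tuple.sort g i) := by omega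
      have h5 := h (Tuple.sort g j) (Tuple.sort g i) hx
      by_contra hc
      exact h5 (by omega)
    · have h4 : -(y (Tuple.sort g i)) ≤ -(y (Tuple.sort g j)) := h3.2
      omega

/-- A compatible pair with a conflict must be root-conjugate via the conflicting pair. -/
lemma key {k : ℕ} {x y : Fin k → ℤ} {i j : Fin k} (hc : Compatible x y)
    (h1 : x i < x j) (h2 : y j < y i) :
    x j = x i + 1 ∧ ∀ t, y t = x t - (if t = j then 1 else 0) + (if t = i then 1 else 0) := by
  rcases hc with hs | hrc
  · exact absurd (wsortable_no_conf hs h1 h2) id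
  · rw [rc_iff] at hrc
    obtain ⟨a, b, hab, hv, hy⟩ := hrc
    have hyi := hy i
    have hyj := hy j
    have hja : j = a ∧ i = b := by
      by_contra hcon
      split_ifs at hyi hyj <;> first | omega | (exact hcon ⟨by assumption, by assumption⟩)
    obtain ⟨h3, h4⟩ := hja
    subst h3; subst h4
    exact ⟨by omega, hy⟩

/-- Restricted transitivity of root-conjugacy. -/
lemma rc_trans {k : ℕ} {x y z : Fin k → ℤ} (hxy : RootConjugate x y)
    (hyz : RootConjugate y z) (hxz : Compatible x z) (hne : z ≠ x) : RootConjugate x z := by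
  rw [rc_iff] at hxy hyz ⊢
  obtain ⟨a, b, hab, hv1, h1⟩ := hxy
  obtain ⟨p, q, hpq, hv2, h2⟩ := hyz
  by_cases hpb : p = b
  · subst hpb
    by_cases hqa : q = a
    · subst hqa
      exfalso; apply hne; funext t
      have e1 := h1 t
      have e2 := h2 t
      omega
    · refine ⟨a, q, fun h => hqa h.symm, ?_, fun t => ?_⟩
      · have e1 := h1 p
        have e2 := h1 q
        split_ifs at e1 e2 <;> first | omega | simp_all
      · have e1 := h1 t
        have e2 := h2 t
        split_ifs at e1 e2 ⊢ <;> first | omega | (simp_all; try omega)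
  · by_cases hqa : q = a
    · subst hqa
      refine ⟨p, b, fun h => hpb h, ?_, fun t => ?_⟩
      · have e1 := h1 p
        have e2 := h1 q
        split_ifs at e1 e2 <;> first | omega | simp_all
      · have e1 := h1 t
        have e2 := h2 t
        split_ifs at e1 e2 ⊢ <;> first | omega | (simp_all; try omega)
    · -- conflict between x and z at (b, a)
      have hconf : z a < z b := by
        have e1 := h1 a
        have e2 := h1 b
        have e3 := h2 a
        have e4 := h2 b
        split_ifs at e1 e2 e3 e4 <;> first | omega | (simp_all; try omega)
      have hxb : x b < x a := by omega
      exfalso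
      rcases hxz with hs | hrc
      · exact wsortable_no_conf hs hxb hconf
      · obtain ⟨_, hz⟩ := key (Or.inr hrc) hxb hconf
        have hzy : z = y := by
          funext t
          have e1 := hz t
          have e2 := h1 t
          omega
        have e5 := h2 p
        rw [hzy] at e5
        split_ifs at e5 <;> first | omega | simp_all

/-- In a basic multiset of pairwise compatible vectors, the class sums of the
root-conjugacy classes are pairwise `W`-sortable. -/
theorem stmt5 {k : ℕ} (C : Multiset (Fin k → ℤ))
    (hcomp : ∀ l ∈ C, ∀ m ∈ C, l ≠ m → Compatible l m)
    (hbasic : Basic C) :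
    ∀ l ∈ C, ∀ m ∈ C, WSortable (classSum C l) (classSum C m) := by
  intro l hl m hm
  apply wsortable_of_no_conf
  intro i j hσ hτ
  simp only [classSum, Finset.sum_apply] at hσ hτ
  set Ol := C.toFinset.filter (fun n => n = l ∨ RootConjugate l n) with hOl
  set Om := C.toFinset.filter (fun n => n = m ∨ RootConjugate m n) with hOm
  clear_value Ol Om
  obtain ⟨x, hxO, hxij⟩ : ∃ x ∈ Ol, x i < x j := by
    by_contra hc
    push_neg at hc
    have : ∑ c ∈ Ol, c j ≤ ∑ c ∈ Ol, c i := Finset.sum_le_sum hc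
    linarith
  obtain ⟨y, hyO, hyij⟩ : ∃ y ∈ Om, y j < y i := by
    by_contra hc
    push_neg at hc
    have : ∑ c ∈ Om, c i ≤ ∑ c ∈ Om, c j := Finset.sum_le_sum hc
    linarith
  have hxO' : x ∈ C.toFinset.filter (fun n => n = l ∨ RootConjugate l n) := by
    rw [← hOl]; exact hxO
  have hyO' : y ∈ C.toFinset.filter (fun n => n = m ∨ RootConjugate m n) := by
    rw [← hOm]; exact hyO
  have hxC : x ∈ C := Multiset.mem_toFinset.1 (Finset.mem_filter.1 hxO').1
  have hyC : y ∈ C := Multiset.mem_toFinset.1 (Finset.mem_filter.1 hyO').1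
  have hxy : x ≠ y := fun h => by rw [h] at hxij; exact absurd hyij (lt_asymm hxij)
  obtain ⟨hval, hyx⟩ := key (hcomp x hxC y hyC hxy) hxij hyij
  have hij : i ≠ j := fun h => by rw [h] at hxij; exact lt_irrefl _ hxij
  have hyi : y i = x i + 1 := by
    have h3 := hyx i
    rw [if_neg hij, if_pos rfl] at h3
    linarith
  have hyj2 : y j = x i := by
    have h3 := hyx j
    rw [if_pos rfl, if_neg (Ne.symm hij)] at h3
    linarith
  have hrcxy : RootConjugate x y :=
    rc_iff.2 ⟨j, i, Ne.symm hij, hval, hyx⟩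
  -- `y` belongs to the class of `l`
  have hyOl : y ∈ Ol := by
    rw [hOl, Finset.mem_filter]
    refine ⟨Multiset.mem_toFinset.2 hyC, ?_⟩
    rcases (Finset.mem_filter.1 hxO').2 with rfl | hrc
    · exact Or.inr hrcxy
    · rcases eq_or_ne y l with rfl | hyl
      · exact Or.inl rfl
      · exact Or.inr (rc_trans hrc hrcxy (hcomp l hl y hyC (Ne.symm hyl)) hyl)
  -- the swap `(i j)` permutes `Ol`
  have hmem : ∀ ν ∈ Ol, (fun t => ν (Equiv.swap i j t)) ∈ Ol := by
    intro ν hν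
    rcases eq_or_ne ν x with rfl | hνx
    · have hfy : (fun t => ν (Equiv.swap i j t)) = y := by
        funext t
        rw [Equiv.swap_apply_def]
        split_ifs with g1 g2
        · rw [g1]; linarith
        · rw [g2]; linarith
        · have h3 := hyx t
          rw [if_neg g2, if_neg g1] at h3
          linarith
      rw [hfy]; exact hyOl
    · rcases eq_or_ne ν y with rfl | hνy
      · have hfx : (fun t => ν (Equiv.swap i j t)) = x := by
          funext t
          rw [Equiv.swap_apply_def]
          split_ifs with g1 g2
          · rw [g1]; linarith
          · rw [g2]; linarith
          · have h3 := hyx t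
            rw [if_neg g2, if_neg g1] at h3
            linarith
        rw [hfx]; exact hxO
      · have hν' : ν ∈ C.toFinset.filter (fun n => n = l ∨ RootConjugate l n) := by
          rw [← hOl]; exact hν
        have hνC : ν ∈ C := Multiset.mem_toFinset.1 (Finset.mem_filter.1 hν').1
        have hνij : ν i = ν j := by
          rcases lt_trichotomy (ν i) (ν j) with hlt | heq | hgt
          · have hyj : y j < y i := by linarith
            obtain ⟨_, hν2⟩ := key (hcomp ν hνC y hyC hνy) hlt hyj
            refine absurd (funext fun t => ?_ : ν = x) hνx
            have b1 := hν2 t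
            have b2 := hyx t
            linarith
          · exact heq
          · obtain ⟨_, hν2⟩ := key (hcomp x hxC ν hνC (Ne.symm hνx)) hxij hgt
            refine absurd (funext fun t => ?_ : ν = y) hνy
            have b1 := hν2 t
            have b2 := hyx t
            linarith
        have hfν : (fun t => ν (Equiv.swap i j t)) = ν := by
          funext t
          rw [Equiv.swap_apply_def]
          split_ifs with g1 g2
          · rw [g1, hνij]
          · rw [g2, hνij]
          · rfl
        rw [hfν]; exact hν
  have hsum : ∑ ν ∈ Ol, ν i = ∑ ν ∈ Ol, ν j := by
    refine Finset.sum_nbij' (i := fun ν => fun t => ν (Equiv.swap i j t))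
      (j := fun ν => fun t => ν (Equiv.swap i j t)) hmem hmem ?_ ?_ ?_
    · intro a _
      funext t
      simp [Equiv.swap_apply_self]
    · intro a _
      funext t
      simp [Equiv.swap_apply_self]
    · intro a _
      simp [Equiv.swap_apply_right]
  linarith
end

section
/- Let Q be a finite quiver without loops or oriented 2-cycles, let A be an abelian group, and let wt : V(Q) → A satisfy the balancing condition Σ_{u→v in Q} wt(u) = Σ_{v→u in Q} wt(u) at every vertex v. Let Q′ = μ_v(Q) be the quiver mutation of Q at a vertex v and define wt′(v) = −wt(v) + Σ_{u→v in Q} wt(u), with wt′(x) = wt(x) for x ≠ v. Then (Q′, wt′) again satisfies the balancing condition at every vertex. -/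
/-- Mutation of a balanced weighted quiver preserves the balancing condition.

A quiver without loops or oriented 2-cycles is encoded by its skew-symmetric exchange
matrix `B : V → V → ℤ`, where `(B u v).toNat` is the number of arrows `u → v`.  The
weights `wt : V → A` satisfy the balancing condition `Σ_{u→v} wt u = Σ_{v→u} wt u` at
every vertex `v`.  Mutation at `v` replaces `B` by `B'` (standard matrix mutation) and
`wt v` by `-wt v + Σ_{u→v} wt u`.  Then `(B', wt')` again satisfies the balancing
condition at every vertex. -/
theorem stmt8 {V A : Type*} [Fintype V] [DecidableEq V] [AddCommGroup A]
    (B B' : V → V → ℤ) (hskew : ∀ x y, B x y = - B y x)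
    (wt : V → A)
    (hbal : ∀ w : V, ∑ u : V, (B u w).toNat • wt u = ∑ u : V, (B w u).toNat • wt u)
    (v : V)
    (hB' : ∀ x y, B' x y = if x = v ∨ y = v then - B x y
      else B x y + max (B x v) 0 * max (B v y) 0 - max (- B x v) 0 * max (- B v y) 0)
    (wt' : V → A)
    (hwt' : wt' = Function.update wt v (- wt v + ∑ u : V, (B u v).toNat • wt u)) :
    ∀ w : V, ∑ u : V, (B' u w).toNat • wt' u = ∑ u : V, (B' w u).toNat • wt' u := by
  have hdiag : ∀ x, B x x = 0 := fun x => by have := hskew x x; omega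
  have hz : ∀ (n : ℤ) (a : A), n • a = (n.toNat) • a - ((-n).toNat) • a := by
    intro n a
    rw [← natCast_zsmul, ← natCast_zsmul, ← sub_smul]
    congr 1
    omega
  have hskew' : ∀ x y, B' x y = - B' y x := by
    intro x y
    rw [hB', hB']
    by_cases h : x = v ∨ y = v
    · have h' : y = v ∨ x = v := h.symm
      rw [if_pos h, if_pos h', hskew x y]
    · have h' : ¬ (y = v ∨ x = v) := fun hc => h hc.symm
      rw [if_neg h, if_neg h', hskew y x, hskew y v, hskew v x]
      simp only [neg_neg]
      ring
  have hbalz : ∀ w, ∑ u : V, (B u w) • wt u = (0 : A) := by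
    intro w
    have h1 : ∑ u : V, (B u w) • wt u
        = ∑ u : V, ((B u w).toNat • wt u - (B w u).toNat • wt u) := by
      refine Finset.sum_congr rfl fun u _ => ?_
      rw [hz, hskew w u]
    rw [h1, Finset.sum_sub_distrib, hbal w, sub_self]
  intro w
  suffices key : ∑ u : V, (B' u w) • wt' u = 0 by
    have h1 : ∑ u : V, (B' u w) • wt' u
        = ∑ u : V, (B' u w).toNat • wt' u - ∑ u : V, (B' w u).toNat • wt' u := by
      rw [← Finset.sum_sub_distrib]
      refine Finset.sum_congr rfl fun u _ => ?_
      rw [hz, hskew' w u]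
    rw [h1] at key
    exact sub_eq_zero.mp key
  by_cases hw : w = v
  · subst hw
    have h1 : ∑ u : V, (B' u w) • wt' u = ∑ u : V, -((B u w) • wt u) := by
      refine Finset.sum_congr rfl fun u _ => ?_
      by_cases hu : u = w
      · subst hu
        rw [hB', if_pos (Or.inl rfl), hdiag, neg_zero, zero_smul, zero_smul, neg_zero]
      · rw [hB', if_pos (Or.inr rfl), hwt', Function.update_of_ne hu, neg_smul]
    rw [h1, Finset.sum_neg_distrib, hbalz, neg_zero]
  · rw [← Finset.add_sum_erase _ _ (Finset.mem_univ v)]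
    have hterm : ∀ u ∈ Finset.univ.erase v,
        (B' u w) • wt' u = (B u w) • wt u
          + max (B v w) 0 • ((B u v).toNat • wt u)
          - max (-(B v w)) 0 • ((B v u).toNat • wt u) := by
      intro u hu
      have hu' : u ≠ v := Finset.ne_of_mem_erase hu
      rw [hB', if_neg (by simp [hu', hw]), hwt', Function.update_of_ne hu',
        sub_smul, add_smul]
      congr 1
      · congr 1
        rw [mul_comm, mul_smul]
        congr 1
        rw [← Int.toNat_eq_max, natCast_zsmul]
      · rw [mul_comm, mul_smul]
        congr 1
        rw [← hskew v u, ← Int.toNat_eq_max, natCast_zsmul]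
    rw [Finset.sum_congr rfl hterm]
    simp only [Finset.sum_sub_distrib, Finset.sum_add_distrib, ← Finset.smul_sum]
    have e1 : ∑ u ∈ Finset.univ.erase v, (B u w) • wt u = - ((B v w) • wt v) := by
      rw [Finset.sum_erase_eq_sub (Finset.mem_univ v), hbalz, zero_sub]
    have e2 : ∑ u ∈ Finset.univ.erase v, (B u v).toNat • wt u
        = ∑ u : V, (B u v).toNat • wt u := by
      apply Finset.sum_erase
      rw [hdiag]
      simp
    have e3 : ∑ u ∈ Finset.univ.erase v, (B v u).toNat • wt u
        = ∑ u : V, (B u v).toNat • wt u := by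
      rw [Finset.sum_erase _ (by rw [hdiag]; simp), hbal v]
    rw [e1, e2, e3, hB', if_pos (Or.inl rfl), hwt', Function.update_self]
    set S : A := ∑ u : V, (B u v).toNat • wt u with hS
    have e4 : max (B v w) 0 • S - max (-(B v w)) 0 • S = (B v w) • S := by
      rw [← sub_smul]
      congr 1
      omega
    rw [add_sub_assoc, e4, neg_smul, smul_add, smul_neg]
    abel
end

section
/- Let V be a k-dimensional vector space over a field with basis v_1, …, v_k, and let u : V → V be a linear map with u(v_i) − v_i ∈ span{v_1, …, v_{i−1}} for all i. For an a-subset T = {t_1 < ⋯ < t_a} of [k] write v_T = v_{t_1} ∧ ⋯ ∧ v_{t_a} ∈ ⋀^a V. Then (⋀^a u − id)(v_T) lies in the span of {v_{T′} : T′ an a-subset with T′ < T in termwise order}. -/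
open ExteriorAlgebra

/-- The wedge `v_T = v_{t₁} ∧ ⋯ ∧ v_{t_a}` of the family `b` over the subset `T`,
taken in increasing order, as an element of the exterior algebra. -/
noncomputable def wedge {F V : Type*} [Field F] [AddCommGroup V] [Module F V] {k : ℕ}
    (b : Fin k → V) (T : Finset (Fin k)) : ExteriorAlgebra F V :=
  ((T.sort (· ≤ ·)).map fun i => ExteriorAlgebra.ι F (b i)).prod

/-- Termwise (Gale) order on `a`-element subsets of `Fin k`. -/
def TermLEF {k : ℕ} (a : ℕ) (T S : Finset (Fin k)) (hT : T.card = a) (hS : S.card = a) :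
    Prop :=
  ∀ i : Fin a, T.orderEmbOfFin hT i ≤ S.orderEmbOfFin hS i

section aux

variable {F V : Type*} [Field F] [AddCommGroup V] [Module F V] {k : ℕ}

noncomputable def wedgeL (b : Fin k → V) (N : List (Fin k)) : ExteriorAlgebra F V :=
  (N.map fun i => ExteriorAlgebra.ι F (b i)).prod

def sval {k : ℕ} (N : List (Fin k)) : ℕ := (N.map Fin.val).sum

lemma wedgeL_cons (b : Fin k → V) (x : Fin k) (N : List (Fin k)) :
    wedgeL (F := F) b (x :: N) = ExteriorAlgebra.ι F (b x) * wedgeL (F := F) b N := by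
  simp [wedgeL]

lemma apply_mem_span {A B : Type*} [AddCommGroup A] [Module F A] [AddCommGroup B] [Module F B]
    (f : A →ₗ[F] B) {S : Set A} {p : Submodule F B} (h : ∀ s ∈ S, f s ∈ p) {z : A}
    (hz : z ∈ Submodule.span F S) : f z ∈ p := by
  induction hz using Submodule.span_induction with
  | mem s hs => exact h s hs
  | zero => simpa using p.zero_mem
  | add x y _ _ hx hy => simpa using p.add_mem hx hy
  | smul c x _ hx => simpa using p.smul_mem c hx

/-- straightening + dominance lemma -/
lemma SL (b : Fin k → V) : ∀ (N : List (Fin k)) (x t : Fin k) (L₀ : List (Fin k)),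
    N.Pairwise (· < ·) → List.Forall₂ (· ≤ ·) N L₀ → x ≤ t → (t :: L₀).Pairwise (· < ·) →
    wedgeL (F := F) b (x :: N) ∈ Submodule.span F {y | ∃ N' : List (Fin k),
      N'.Pairwise (· < ·) ∧ List.Forall₂ (· ≤ ·) N' (t :: L₀) ∧
      (↑N' : Multiset (Fin k)) = (↑(x :: N) : Multiset (Fin k)) ∧ y = wedgeL (F := F) b N'}
  | [], x, t, L₀, hN, hF, hxt, hL => by
    have hL0 : L₀ = [] := by cases hF; rfl
    subst hL0
    exact Submodule.subset_span ⟨[x], by simp, by simp [hxt], rfl, rfl⟩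
  | n :: N₀, x, t, L₀, hN, hF, hxt, hL => by
    obtain ⟨l, L₁, hnl, hF₀, rfl⟩ :
        ∃ l L₁, n ≤ l ∧ List.Forall₂ (· ≤ ·) N₀ L₁ ∧ L₀ = l :: L₁ := by
      cases hF with
      | cons h1 h2 => exact ⟨_, _, h1, h2, rfl⟩
    rcases lt_trichotomy x n with hxn | hxn | hxn
    · -- x < n : already sorted
      refine Submodule.subset_span ⟨x :: n :: N₀, ?_, ?_, rfl, rfl⟩
      · exact List.pairwise_cons.2 ⟨fun c hc => by
          rcases List.mem_cons.1 hc with rfl | hc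
          · exact hxn
          · exact hxn.trans ((List.pairwise_cons.1 hN).1 c hc), hN⟩
      · exact List.Forall₂.cons hxt hF
    · -- x = n : zero
      subst hxn
      have : wedgeL (F := F) b (x :: x :: N₀) = 0 := by
        rw [wedgeL_cons, wedgeL_cons, ← mul_assoc, ι_sq_zero, zero_mul]
      rw [this]; exact Submodule.zero_mem _
    · -- x > n : swap
      have hN₀ : N₀.Pairwise (· < ·) := (List.pairwise_cons.1 hN).2
      have hnlt : ∀ c ∈ N₀, n < c := (List.pairwise_cons.1 hN).1
      have htl : t < l := (List.pairwise_cons.1 hL).1 l (by simp)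
      have hL' : (l :: L₁).Pairwise (· < ·) := (List.pairwise_cons.1 hL).2
      have hxl : x ≤ l := le_of_lt (lt_of_le_of_lt hxt htl)
      have key := SL b N₀ x l L₁ hN₀ hF₀ hxl hL'
      have swap : wedgeL (F := F) b (x :: n :: N₀) =
          -(ExteriorAlgebra.ι F (b n) * wedgeL (F := F) b (x :: N₀)) := by
        rw [wedgeL_cons, wedgeL_cons, wedgeL_cons, ← mul_assoc, ← mul_assoc]
        have h0 := ι_add_mul_swap (R := F) (b x) (b n)
        have : ExteriorAlgebra.ι F (b x) * ExteriorAlgebra.ι F (b n) =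
            -(ExteriorAlgebra.ι F (b n) * ExteriorAlgebra.ι F (b x)) := by
          exact eq_neg_of_add_eq_zero_left h0
        rw [this, neg_mul]
      rw [swap]
      refine Submodule.neg_mem _ ?_
      refine apply_mem_span (LinearMap.mulLeft F (ExteriorAlgebra.ι F (b n))) ?_ key
      rintro s ⟨N', hN's, hN'F, hN'm, rfl⟩
      have hmem : ∀ c ∈ N', n < c := by
        intro c hc
        have : c ∈ (↑N' : Multiset (Fin k)) := by simpa using hc
        rw [hN'm] at this
        have : c ∈ x :: N₀ := by simpa using this
        rcases List.mem_cons.1 this with rfl | hc'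
        · exact hxn
        · exact hnlt c hc'
      have : LinearMap.mulLeft F (ExteriorAlgebra.ι F (b n)) (wedgeL (F := F) b N') =
          wedgeL (F := F) b (n :: N') := by
        simp [wedgeL_cons, LinearMap.mulLeft_apply]
      rw [this]
      refine Submodule.subset_span ⟨n :: N', ?_, ?_, ?_, rfl⟩
      · exact List.pairwise_cons.2 ⟨hmem, hN's⟩
      · exact List.Forall₂.cons (le_of_lt (lt_of_lt_of_le hxn hxt)) hN'F
      · show (↑(n :: N') : Multiset (Fin k)) = _
        have : (↑(n :: N') : Multiset (Fin k)) = n ::ₘ (↑N' : Multiset (Fin k)) := rfl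
        rw [this, hN'm]
        change n ::ₘ x ::ₘ (↑N₀ : Multiset (Fin k)) = x ::ₘ n ::ₘ (↑N₀ : Multiset (Fin k))
        exact Multiset.cons_swap n x _

lemma sval_multiset_eq {N M : List (Fin k)} (h : (↑N : Multiset (Fin k)) = ↑M) :
    sval N = sval M := by
  have := congrArg (fun s : Multiset (Fin k) => (s.map Fin.val).sum) h
  simpa [sval] using this

/-- main induction -/
lemma ML (b : Fin k → V) (u : V →ₗ[F] V)
    (hu : ∀ i : Fin k, u (b i) - b i ∈
      Submodule.span F {x | ∃ j : Fin k, j < i ∧ x = b j}) :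
    ∀ (L : List (Fin k)), L.Pairwise (· < ·) →
    ExteriorAlgebra.map u (wedgeL (F := F) b L) - wedgeL (F := F) b L ∈
      Submodule.span F {x | ∃ N : List (Fin k), N.Pairwise (· < ·) ∧
        List.Forall₂ (· ≤ ·) N L ∧ sval N < sval L ∧ x = wedgeL (F := F) b N}
  | [], _ => by
    simp only [wedgeL, List.map_nil, List.prod_nil, map_one, sub_self]
    exact Submodule.zero_mem _
  | t :: L₀, hL => by
    have hL₀ : L₀.Pairwise (· < ·) := (List.pairwise_cons.1 hL).2
    set P := wedgeL (F := F) b L₀ with hP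
    set D := ExteriorAlgebra.map u P - P with hD
    have hDspan := ML b u hu L₀ hL₀
    rw [← hP, ← hD] at hDspan
    set SP := Submodule.span F {x | ∃ N : List (Fin k), N.Pairwise (· < ·) ∧
        List.Forall₂ (· ≤ ·) N (t :: L₀) ∧ sval N < sval (t :: L₀) ∧
        x = wedgeL (F := F) b N} with hSP
    -- the SL lemma packaged: any (x::N) with N good for L₀, x ≤ t, strict sum, is in SP
    have inSP : ∀ (x : Fin k) (N : List (Fin k)), N.Pairwise (· < ·) →
        List.Forall₂ (· ≤ ·) N L₀ → x ≤ t → x.val + sval N < sval (t :: L₀) →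
        wedgeL (F := F) b (x :: N) ∈ SP := by
      intro x N hNs hNF hxt hsum
      refine Submodule.span_le.2 ?_ (SL b N x t L₀ hNs hNF hxt hL)
      rintro y ⟨N', h1, h2, h3, rfl⟩
      refine Submodule.subset_span ⟨N', h1, h2, ?_, rfl⟩
      rw [sval_multiset_eq h3]
      simpa [sval] using hsum
    have hDSP : ∀ (x : Fin k), x ≤ t → ∀ z ∈ Submodule.span F
        {y | ∃ N : List (Fin k), N.Pairwise (· < ·) ∧ List.Forall₂ (· ≤ ·) N L₀ ∧
          sval N < sval L₀ ∧ y = wedgeL (F := F) b N},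
        ExteriorAlgebra.ι F (b x) * z ∈ SP := by
      intro x hxt z hz
      refine apply_mem_span (LinearMap.mulLeft F (ExteriorAlgebra.ι F (b x))) ?_ hz
      rintro s ⟨N, h1, h2, h3, rfl⟩
      have : LinearMap.mulLeft F (ExteriorAlgebra.ι F (b x)) (wedgeL (F := F) b N) =
          wedgeL (F := F) b (x :: N) := by simp [wedgeL_cons]
      rw [this]
      refine inSP x N h1 h2 hxt ?_
      have : sval (t :: L₀) = t.val + sval L₀ := by simp [sval]
      omega
    -- decompose
    set w := u (b t) - b t with hw
    have decomp : ExteriorAlgebra.map u (wedgeL (F := F) b (t :: L₀)) -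
        wedgeL (F := F) b (t :: L₀) =
        ExteriorAlgebra.ι F (b t) * D + ExteriorAlgebra.ι F w * P +
          ExteriorAlgebra.ι F w * D := by
      rw [wedgeL_cons, map_mul, map_apply_ι]
      have huw : u (b t) = b t + w := by rw [hw]; abel
      rw [huw, map_add]
      rw [hD]
      noncomm_ring
    rw [decomp]
    refine Submodule.add_mem _ (Submodule.add_mem _ ?_ ?_) ?_
    · -- ι (b t) * D
      exact hDSP t le_rfl D hDspan
    · -- ι w * P
      refine apply_mem_span ((LinearMap.mulRight F P).comp (ExteriorAlgebra.ι F)) ?_ (hu t)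
      rintro s ⟨j, hj, rfl⟩
      have : ((LinearMap.mulRight F P).comp (ExteriorAlgebra.ι F)) (b j) =
          wedgeL (F := F) b (j :: L₀) := by
        simp [wedgeL_cons, hP, LinearMap.mulRight_apply]
      rw [this]
      refine inSP j L₀ hL₀ (List.forall₂_refl L₀) (le_of_lt hj) ?_
      have : sval (t :: L₀) = t.val + sval L₀ := by simp [sval]
      have : j.val < t.val := hj
      simp [sval] at *
      omega
    · -- ι w * D
      refine apply_mem_span ((LinearMap.mulRight F D).comp (ExteriorAlgebra.ι F)) ?_ (hu t)
      rintro s ⟨j, hj, rfl⟩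
      have : ((LinearMap.mulRight F D).comp (ExteriorAlgebra.ι F)) (b j) =
          ExteriorAlgebra.ι F (b j) * D := by simp [LinearMap.mulRight_apply]
      rw [this]
      exact hDSP j (le_of_lt hj) D hDspan

end aux

/-- If `u` is upper unitriangular with respect to a basis `b` (i.e.
`u(bᵢ) − bᵢ ∈ span{bⱼ : j < i}`), then for any `a`-subset `T`, `(⋀^a u − id)(v_T)` lies
in the span of the wedges `v_{T'}` for `a`-subsets `T'` strictly below `T` in termwise
order. -/
theorem stmt11 {F V : Type*} [Field F] [AddCommGroup V] [Module F V] {k a : ℕ}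
    (b : Module.Basis (Fin k) F V) (u : V →ₗ[F] V)
    (hu : ∀ i : Fin k, u (b i) - b i ∈
      Submodule.span F {x | ∃ j : Fin k, j < i ∧ x = b j})
    (T : Finset (Fin k)) (hT : T.card = a) :
    ExteriorAlgebra.map u (wedge (F := F) (⇑b) T) - wedge (F := F) (⇑b) T ∈
      Submodule.span F {x | ∃ (T' : Finset (Fin k)) (hT' : T'.card = a),
        TermLEF a T' T hT' hT ∧ T' ≠ T ∧ x = wedge (F := F) (⇑b) T'} := by
  set L := T.sort (· ≤ ·) with hLdef
  have hLs : L.Pairwise (· < ·) := T.sortedLT_sort.pairwise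
  have hwT : wedge (F := F) (⇑b) T = wedgeL (F := F) (⇑b) L := rfl
  have main := ML (F := F) (⇑b) u hu L hLs
  rw [hwT]
  refine Submodule.span_le.2 ?_ main
  rintro y ⟨N, hNs, hNF, hNsum, rfl⟩
  have hNnodup : N.Nodup := hNs.nodup
  have hT' : (N.toFinset).card = a := by
    rw [List.toFinset_card_of_nodup hNnodup, hNF.length_eq]
    rw [hLdef, Finset.length_sort, hT]
  have hsortN : N.toFinset.sort (· ≤ ·) = N :=
    (List.toFinset_sort (· ≤ ·) hNnodup).2 (hNs.imp le_of_lt)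
  have hlen : N.length = L.length := hNF.length_eq
  refine Submodule.subset_span ⟨N.toFinset, hT', ?_, ?_, ?_⟩
  · -- TermLEF
    intro i
    have hget := List.forall₂_iff_get.1 hNF
    have hi1 : (i : ℕ) < N.length := by rw [hlen, hLdef, Finset.length_sort, hT]; exact i.2
    have hi2 : (i : ℕ) < L.length := by rw [hLdef, Finset.length_sort, hT]; exact i.2
    have := hget.2 i.val hi1 hi2
    simpa [Finset.orderEmbOfFin_apply, hsortN, List.get_eq_getElem, hLdef] using this
  · -- ≠
    intro hEq
    have : N = L := by rw [← hsortN, hEq]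
    rw [this] at hNsum
    exact lt_irrefl _ hNsum
  · -- wedge eq
    show wedgeL (F := F) (⇑b) N = wedge (F := F) (⇑b) N.toFinset
    rw [wedge, hsortN]; rfl
end

section
/- Let V be a k-dimensional vector space with basis v_1, …, v_k and let u be upper unitriangular in this basis (u(v_i) − v_i ∈ span{v_1,…,v_{i−1}}). Let S be an a-subset of [k] with ℓ(S) = Σ_i (s_i − i). Then for every a-subset T with T < S in termwise order we have (⋀^a u − id)^{ℓ(S)}(v_T) = 0, and (⋀^a u − id)^{ℓ(S)}(v_S) is a scalar multiple of v_{[a]} = v_1 ∧ ⋯ ∧ v_a. -/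
open ExteriorAlgebra

/-- `ℓ(S) = Σᵢ (sᵢ − i)`: the rank of `S` in the termwise order (0-indexed). -/
def ellF {k : ℕ} (a : ℕ) (S : Finset (Fin k)) (hS : S.card = a) : ℕ :=
  ∑ i : Fin a, ((S.orderEmbOfFin hS i : ℕ) - (i : ℕ))

section Aux

variable {F V : Type*} [Field F] [AddCommGroup V] [Module F V] {k a : ℕ}

private lemma wedge_eq_iotaMulti (b : Fin k → V) (T : Finset (Fin k)) (hT : T.card = a) :
    wedge (F := F) b T = ιMulti F a (fun i => b (T.orderEmbOfFin hT i)) := by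
  rw [ιMulti_apply, wedge]
  congr 1
  apply List.ext_getElem
  · simp [hT]
  · intro n h1 h2
    simp [Finset.orderEmbOfFin_apply]

private lemma image_orderEmbOfFin (T : Finset (Fin k)) (hT : T.card = a) :
    Finset.image (T.orderEmbOfFin hT) Finset.univ = T := by
  apply Finset.coe_injective
  rw [Finset.coe_image, Finset.coe_univ, Set.image_univ, Finset.range_orderEmbOfFin]

private lemma sum_eq_sum_orderEmbOfFin (T : Finset (Fin k)) (hT : T.card = a) :
    ∑ i ∈ T, (i : ℕ) = ∑ i : Fin a, ((T.orderEmbOfFin hT i : Fin k) : ℕ) := by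
  have h : ∑ x ∈ Finset.image (fun i : Fin a => T.orderEmbOfFin hT i) Finset.univ, (x : ℕ)
      = ∑ i : Fin a, ((T.orderEmbOfFin hT i : Fin k) : ℕ) :=
    Finset.sum_image (fun x _ y _ h => (T.orderEmbOfFin hT).injective h)
  rw [show Finset.image (fun i : Fin a => T.orderEmbOfFin hT i) Finset.univ = T from
    image_orderEmbOfFin T hT] at h
  exact h

private lemma le_orderEmbOfFin (T : Finset (Fin k)) (hT : T.card = a) (i : Fin a) :
    (i : ℕ) ≤ ((T.orderEmbOfFin hT i : Fin k) : ℕ) := by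
  obtain ⟨n, hn⟩ := i
  induction n with
  | zero => exact Nat.zero_le _
  | succ m ih =>
    have hm : m < a := Nat.lt_of_succ_lt hn
    have h1 : (T.orderEmbOfFin hT ⟨m, hm⟩ : Fin k) < T.orderEmbOfFin hT ⟨m + 1, hn⟩ :=
      (T.orderEmbOfFin hT).strictMono (by simp [Fin.lt_def])
    have h2 : ((T.orderEmbOfFin hT ⟨m, hm⟩ : Fin k) : ℕ) <
        ((T.orderEmbOfFin hT ⟨m + 1, hn⟩ : Fin k) : ℕ) := h1
    have h3 := ih hm
    have h4 : ((⟨m, hm⟩ : Fin a) : ℕ) = m := rfl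
    have h5 : ((⟨m + 1, hn⟩ : Fin a) : ℕ) = m + 1 := rfl
    rw [h4] at h3
    rw [h5]
    omega

private lemma base_le_sum (T : Finset (Fin k)) (hT : T.card = a) :
    (∑ i : Fin a, (i : ℕ)) ≤ ∑ i ∈ T, (i : ℕ) := by
  rw [sum_eq_sum_orderEmbOfFin T hT]
  exact Finset.sum_le_sum fun i _ => le_orderEmbOfFin T hT i

private lemma eq_min_of_sum_le (T : Finset (Fin k)) (hT : T.card = a)
    (h : ∑ i ∈ T, (i : ℕ) ≤ ∑ i : Fin a, (i : ℕ)) :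
    T = Finset.univ.filter fun i : Fin k => (i : ℕ) < a := by
  rw [sum_eq_sum_orderEmbOfFin T hT] at h
  have heq : ∀ i : Fin a, ((T.orderEmbOfFin hT i : Fin k) : ℕ) = (i : ℕ) := by
    by_contra hc
    push_neg at hc
    obtain ⟨i, hi⟩ := hc
    have : (∑ j : Fin a, (j : ℕ)) < ∑ j : Fin a, ((T.orderEmbOfFin hT j : Fin k) : ℕ) :=
      Finset.sum_lt_sum (fun j _ => le_orderEmbOfFin T hT j)
        ⟨i, Finset.mem_univ i, lt_of_le_of_ne (le_orderEmbOfFin T hT i) (Ne.symm hi)⟩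
    omega
  ext x
  simp only [Finset.mem_filter, Finset.mem_univ, true_and]
  constructor
  · intro hx
    have : x ∈ (↑T : Set (Fin k)) := hx
    rw [← Finset.range_orderEmbOfFin T hT] at this
    obtain ⟨i, rfl⟩ := this
    rw [heq i]
    exact i.2
  · intro hx
    have : T.orderEmbOfFin hT ⟨(x : ℕ), hx⟩ = x := by
      apply Fin.ext
      rw [heq ⟨(x : ℕ), hx⟩]
    rw [← this]
    exact Finset.orderEmbOfFin_mem T hT _

private lemma ellF_add_base (S : Finset (Fin k)) (hS : S.card = a) :
    ellF a S hS + (∑ i : Fin a, (i : ℕ)) = ∑ i ∈ S, (i : ℕ) := by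
  rw [ellF, sum_eq_sum_orderEmbOfFin S hS, ← Finset.sum_add_distrib]
  exact Finset.sum_congr rfl fun i _ => Nat.sub_add_cancel (le_orderEmbOfFin S hS i)

variable (b : Module.Basis (Fin k) F V) (u : V →ₗ[F] V)
    (hu : ∀ i : Fin k, u (b i) - b i ∈
      Submodule.span F {x | ∃ j : Fin k, j < i ∧ x = b j})

include hu in
private lemma repr_eq_zero_of_lt {t j : Fin k} (h : t < j) : b.repr (u (b t)) j = 0 := by
  have hset : {x | ∃ j : Fin k, j < t ∧ x = b j} = ⇑b '' {j | j < t} := by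
    ext x
    simp only [Set.mem_setOf_eq, Set.mem_image]
    exact ⟨fun ⟨j, hj, hx⟩ => ⟨j, hj, hx.symm⟩, fun ⟨j, hj, hx⟩ => ⟨j, hj, hx.symm⟩⟩
  have hmem := hu t
  rw [hset, Module.Basis.mem_span_image] at hmem
  have h1 : b.repr (u (b t) - b t) j = 0 := by
    by_contra hne
    exact absurd (hmem (Finsupp.mem_support_iff.2 hne)) (not_lt.2 h.le)
  rw [map_sub, Finsupp.sub_apply] at h1
  have h2 : b.repr (b t) j = 0 := by
    rw [b.repr_self]
    exact Finsupp.single_eq_of_ne h.ne'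
  rw [h2, sub_zero] at h1
  exact h1

include hu in
private lemma repr_diag (t : Fin k) : b.repr (u (b t)) t = 1 := by
  have hset : {x | ∃ j : Fin k, j < t ∧ x = b j} = ⇑b '' {j | j < t} := by
    ext x
    simp only [Set.mem_setOf_eq, Set.mem_image]
    exact ⟨fun ⟨j, hj, hx⟩ => ⟨j, hj, hx.symm⟩, fun ⟨j, hj, hx⟩ => ⟨j, hj, hx.symm⟩⟩
  have hmem := hu t
  rw [hset, Module.Basis.mem_span_image] at hmem
  have h1 : b.repr (u (b t) - b t) t = 0 := by
    by_contra hne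
    exact absurd (hmem (Finsupp.mem_support_iff.2 hne)) (lt_irrefl t)
  rw [map_sub, Finsupp.sub_apply] at h1
  have h2 : b.repr (b t) t = 1 := by rw [b.repr_self]; exact Finsupp.single_eq_same
  rw [h2] at h1
  exact sub_eq_zero.1 h1

include hu in
private lemma stepA (T : Finset (Fin k)) (hT : T.card = a) :
    (ExteriorAlgebra.map u) (wedge (F := F) ⇑b T) - wedge (F := F) ⇑b T ∈
      Submodule.span F {x | ∃ T' : Finset (Fin k), ∃ _hT' : T'.card = a,
        (∑ i ∈ T', (i : ℕ)) < (∑ i ∈ T, (i : ℕ)) ∧ x = wedge (F := F) ⇑b T'} := by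
  classical
  set f : Fin a → Fin k := fun i => T.orderEmbOfFin hT i with hfdef
  have hfinj : Function.Injective f := (T.orderEmbOfFin hT).injective
  have key : ιMulti F a (⇑u ∘ fun i => b (f i)) =
      ∑ r : Fin a → Fin k,
        (∏ i, b.repr (u (b (f i))) (r i)) • ιMulti F a (fun i => b (r i)) := by
    have h1 : (⇑u ∘ fun i => b (f i)) =
        fun i => ∑ j : Fin k, b.repr (u (b (f i))) j • b j := by
      funext i
      exact (b.sum_repr _).symm
    rw [h1]
    rw [show ιMulti F a (M := V) (fun i => ∑ j : Fin k, b.repr (u (b (f i))) j • b j)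
        = (ιMulti F a (M := V)).toMultilinearMap
          (fun i => ∑ j : Fin k, b.repr (u (b (f i))) j • b j) from rfl]
    rw [MultilinearMap.map_sum]
    exact Finset.sum_congr rfl fun r _ =>
      (ιMulti F a (M := V)).toMultilinearMap.map_smul_univ _ _
  have hfterm : (∏ i, b.repr (u (b (f i))) (f i)) • ιMulti F a (fun i => b (f i))
      = wedge (F := F) ⇑b T := by
    rw [wedge_eq_iotaMulti (F := F) ⇑b T hT,
      Finset.prod_eq_one fun i _ => repr_diag b u hu (f i), one_smul]
  have hmapped : (ExteriorAlgebra.map u) (wedge (F := F) ⇑b T) =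
      ∑ r : Fin a → Fin k,
        (∏ i, b.repr (u (b (f i))) (r i)) • ιMulti F a (fun i => b (r i)) := by
    rw [wedge_eq_iotaMulti (F := F) ⇑b T hT, map_apply_ιMulti]
    exact key
  rw [hmapped, ← Finset.add_sum_erase _ _ (Finset.mem_univ f), hfterm, add_sub_cancel_left]
  apply Submodule.sum_mem
  intro r hr
  have hrne : r ≠ f := Finset.ne_of_mem_erase hr
  by_cases hle : ∀ i, r i ≤ f i
  · by_cases hinj : Function.Injective r
    · -- the interesting case
      set T' : Finset (Fin k) := Finset.image r Finset.univ with hT'def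
      have hT' : T'.card = a := by
        rw [hT'def, Finset.card_image_of_injective _ hinj, Finset.card_univ, Fintype.card_fin]
      have hlt : ∃ i, r i < f i := by
        by_contra hc
        push_neg at hc
        exact hrne (funext fun i => le_antisymm (hle i) (hc i))
      obtain ⟨i0, hi0⟩ := hlt
      have hsum : ∑ i ∈ T', (i : ℕ) < ∑ i ∈ T, (i : ℕ) := by
        have h1 : ∑ i ∈ T', (i : ℕ) = ∑ i : Fin a, ((r i : Fin k) : ℕ) :=
          Finset.sum_image fun x _ y _ h => hinj h
        rw [h1, sum_eq_sum_orderEmbOfFin T hT]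
        exact Finset.sum_lt_sum (fun i _ => Fin.val_le_of_le (hle i))
          ⟨i0, Finset.mem_univ i0, by exact hi0⟩
      -- relate ιMulti (b ∘ r) with wedge T' via a permutation
      have hrange : Set.range r = Set.range (T'.orderEmbOfFin hT') := by
        rw [Finset.range_orderEmbOfFin, hT'def, Finset.coe_image, Finset.coe_univ,
          Set.image_univ]
      set g : Fin a → Fin k := fun i => T'.orderEmbOfFin hT' i with hgdef
      have hginj : Function.Injective g := (T'.orderEmbOfFin hT').injective
      set σ : Equiv.Perm (Fin a) :=
        (Equiv.ofInjective r hinj).trans ((Equiv.setCongr hrange).trans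
          (Equiv.ofInjective g hginj).symm) with hσdef
      have hσ : ∀ i, g (σ i) = r i := by
        intro i
        have : g (σ i) = ((Equiv.ofInjective g hginj) (σ i) : Fin k) := rfl
        rw [this, hσdef]
        simp only [Equiv.trans_apply, Equiv.apply_symm_apply]
        rfl
      have hι : ιMulti F a (fun i => b (r i))
          = Equiv.Perm.sign σ • ιMulti F a (fun i => b (g i)) := by
        have hcomp : (fun i => b (r i)) = (fun i => b (g i)) ∘ σ := by
          funext i
          simp [hσ i]
        rw [hcomp]
        exact AlternatingMap.map_perm _ _ _
      have hwmem : wedge (F := F) ⇑b T' ∈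
          Submodule.span F {x | ∃ T'' : Finset (Fin k), ∃ _hT'' : T''.card = a,
            (∑ i ∈ T'', (i : ℕ)) < (∑ i ∈ T, (i : ℕ)) ∧ x = wedge (F := F) ⇑b T''} :=
        Submodule.subset_span ⟨T', hT', hsum, rfl⟩
      rw [hι, ← wedge_eq_iotaMulti (F := F) ⇑b T' hT']
      rcases Int.units_eq_one_or (Equiv.Perm.sign σ) with hs | hs
      · rw [hs, one_smul]
        exact Submodule.smul_mem _ _ hwmem
      · rw [hs, Units.smul_def, Units.val_neg, Units.val_one, neg_smul, one_smul, smul_neg]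
        exact Submodule.neg_mem _ (Submodule.smul_mem _ _ hwmem)
    · have hbr : ¬ Function.Injective fun i => b (r i) := by
        intro hc
        exact hinj fun x y hxy => hc (show b (r x) = b (r y) by rw [hxy])
      rw [AlternatingMap.map_eq_zero_of_not_injective _ _ hbr, smul_zero]
      exact Submodule.zero_mem _
  · push_neg at hle
    obtain ⟨i, hi⟩ := hle
    have h0 : b.repr (u (b (f i))) (r i) = 0 :=
      repr_eq_zero_of_lt b u hu hi
    rw [Finset.prod_eq_zero (Finset.mem_univ i) h0, zero_smul]
    exact Submodule.zero_mem _

include hu in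
private lemma stepB (m : ℕ) (T : Finset (Fin k)) (hT : T.card = a) :
    ((((ExteriorAlgebra.map u).toLinearMap - LinearMap.id :
        Module.End F (ExteriorAlgebra F V)) ^ m)) (wedge (F := F) ⇑b T) ∈
      Submodule.span F {x | ∃ T' : Finset (Fin k), ∃ _hT' : T'.card = a,
        (∑ i ∈ T', (i : ℕ)) + m ≤ (∑ i ∈ T, (i : ℕ)) ∧ x = wedge (F := F) ⇑b T'} := by
  set N : Module.End F (ExteriorAlgebra F V) :=
    (ExteriorAlgebra.map u).toLinearMap - LinearMap.id with hNdef
  induction m with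
  | zero =>
    rw [pow_zero, Module.End.one_apply]
    exact Submodule.subset_span ⟨T, hT, by omega, rfl⟩
  | succ n ih =>
    rw [pow_succ', Module.End.mul_apply]
    have h2 : Submodule.map N (Submodule.span F {x | ∃ T' : Finset (Fin k), ∃ _hT' : T'.card = a,
          (∑ i ∈ T', (i : ℕ)) + n ≤ (∑ i ∈ T, (i : ℕ)) ∧ x = wedge (F := F) ⇑b T'}) ≤
        Submodule.span F {x | ∃ T' : Finset (Fin k), ∃ _hT' : T'.card = a,
          (∑ i ∈ T', (i : ℕ)) + (n + 1) ≤ (∑ i ∈ T, (i : ℕ)) ∧ x = wedge (F := F) ⇑b T'} := by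
      rw [Submodule.map_span, Submodule.span_le]
      rintro y ⟨x, ⟨T', hT', hsum, rfl⟩, rfl⟩
      have hN : N (wedge (F := F) ⇑b T') =
          (ExteriorAlgebra.map u) (wedge (F := F) ⇑b T') - wedge (F := F) ⇑b T' := by
        rw [hNdef]
        simp [LinearMap.sub_apply]
      rw [SetLike.mem_coe, hN]
      refine Submodule.span_mono ?_ (stepA b u hu T' hT')
      rintro z ⟨T'', hT'', hlt, rfl⟩
      exact ⟨T'', hT'', by omega, rfl⟩
    exact h2 (Submodule.mem_map_of_mem ih)

end Aux

/-- If `u` is upper unitriangular with respect to the basis `b`, then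
`(⋀^a u − id)^{ℓ(S)}` annihilates `v_T` for all `a`-subsets `T < S` in termwise order,
and sends `v_S` to a scalar multiple of `v_{[a]} = v₁ ∧ ⋯ ∧ v_a`. -/
theorem stmt12 {F V : Type*} [Field F] [AddCommGroup V] [Module F V] {k a : ℕ}
    (b : Module.Basis (Fin k) F V) (u : V →ₗ[F] V)
    (hu : ∀ i : Fin k, u (b i) - b i ∈
      Submodule.span F {x | ∃ j : Fin k, j < i ∧ x = b j})
    (S : Finset (Fin k)) (hS : S.card = a) :
    (∀ (T : Finset (Fin k)) (hT : T.card = a),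
      TermLEF a T S hT hS → T ≠ S →
      ((((ExteriorAlgebra.map u).toLinearMap - LinearMap.id : Module.End F (ExteriorAlgebra F V)) ^ ellF a S hS))
        (wedge (F := F) (⇑b) T) = 0) ∧
    ∃ c : F, ((((ExteriorAlgebra.map u).toLinearMap - LinearMap.id : Module.End F (ExteriorAlgebra F V)) ^ ellF a S hS))
        (wedge (F := F) (⇑b) S)
      = c • wedge (F := F) (⇑b) (Finset.univ.filter fun i : Fin k => (i : ℕ) < a) := by
  have hell := ellF_add_base S hS
  constructor
  · intro T hT hTS hne
    have hstep := stepB b u hu (ellF a S hS) T hT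
    have hSumTS : ∑ i ∈ T, (i : ℕ) < ∑ i ∈ S, (i : ℕ) := by
      rw [sum_eq_sum_orderEmbOfFin T hT, sum_eq_sum_orderEmbOfFin S hS]
      have hex : ∃ i : Fin a, (T.orderEmbOfFin hT i : Fin k) < S.orderEmbOfFin hS i := by
        by_contra hc
        push_neg at hc
        have heq : ∀ i : Fin a, T.orderEmbOfFin hT i = S.orderEmbOfFin hS i :=
          fun i => le_antisymm (hTS i) (hc i)
        apply hne
        have : (↑T : Set (Fin k)) = ↑S := by
          rw [← Finset.range_orderEmbOfFin T hT, ← Finset.range_orderEmbOfFin S hS]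
          have hfun : ⇑(T.orderEmbOfFin hT) = ⇑(S.orderEmbOfFin hS) := funext heq
          rw [hfun]
        exact Finset.coe_injective this
      obtain ⟨i0, hi0⟩ := hex
      exact Finset.sum_lt_sum (fun i _ => Fin.val_le_of_le (hTS i))
        ⟨i0, Finset.mem_univ i0, by exact hi0⟩
    have hempty : {x : ExteriorAlgebra F V | ∃ T' : Finset (Fin k), ∃ _hT' : T'.card = a,
        (∑ i ∈ T', (i : ℕ)) + ellF a S hS ≤ (∑ i ∈ T, (i : ℕ)) ∧ x = wedge (F := F) ⇑b T'}
        = ∅ := by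
      ext x
      simp only [Set.mem_setOf_eq, Set.mem_empty_iff_false, iff_false, not_exists]
      rintro T' hT' ⟨hle, rfl⟩
      have := base_le_sum T' hT'
      omega
    rw [hempty, Submodule.span_empty, Submodule.mem_bot] at hstep
    exact hstep
  · have hstep := stepB b u hu (ellF a S hS) S hS
    have hsub : {x : ExteriorAlgebra F V | ∃ T' : Finset (Fin k), ∃ _hT' : T'.card = a,
        (∑ i ∈ T', (i : ℕ)) + ellF a S hS ≤ (∑ i ∈ S, (i : ℕ)) ∧ x = wedge (F := F) ⇑b T'}
        ⊆ {wedge (F := F) (⇑b) (Finset.univ.filter fun i : Fin k => (i : ℕ) < a)} := by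
      rintro x ⟨T', hT', hle, rfl⟩
      have hmin : T' = Finset.univ.filter fun i : Fin k => (i : ℕ) < a :=
        eq_min_of_sum_le T' hT' (by omega)
      rw [hmin]
      rfl
    have hmem := Submodule.span_mono hsub hstep
    rw [Submodule.mem_span_singleton] at hmem
    obtain ⟨c, hc⟩ := hmem
    exact ⟨c, hc.symm⟩
end

section
/- Let S_1, …, S_m be a finite multiset of subsets of [k] such that the vector η = Σ_j ι_{S_j} ∈ ℤ^k has weakly decreasing coordinates (η_1 ≥ η_2 ≥ ⋯ ≥ η_k). Define a rewriting move on multisets of subsets that removes two members S, T and inserts S ∩ T and S ∪ T. Then by a finite sequence of rewriting moves the multiset {S_1, …, S_m} can be transformed into a multiset each of whose members is an initial interval [a] = {1,…,a} for some a ≥ 0 (with [0] = ∅). -/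
/-- A subset of `Fin k` is an initial interval `[a] = {1,…,a}` for some `a ≥ 0`
(with `[0] = ∅`), i.e. in 0-indexed terms `{i : i < a}`. -/
def IsInitialSeg {k : ℕ} (S : Finset (Fin k)) : Prop :=
  ∃ a : ℕ, ∀ i : Fin k, i ∈ S ↔ (i : ℕ) < a

/-- A rewriting move on a multiset of subsets: remove two members `S, T` and insert
`S ∩ T` and `S ∪ T`. -/
def RewriteStep {k : ℕ} (M M' : Multiset (Finset (Fin k))) : Prop :=
  ∃ (S T : Finset (Fin k)) (M₀ : Multiset (Finset (Fin k))),
    M = S ::ₘ T ::ₘ M₀ ∧ M' = (S ∩ T) ::ₘ (S ∪ T) ::ₘ M₀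

/-- a downward-closed subset of `Fin k` is an initial segment -/
lemma isInitialSeg_of_downclosed {k : ℕ} (S : Finset (Fin k))
    (h : ∀ i j : Fin k, i ≤ j → j ∈ S → i ∈ S) : IsInitialSeg S := by
  refine ⟨S.card, fun i => ⟨fun hi => ?_, fun hi => ?_⟩⟩
  · have hsub : Finset.Iic i ⊆ S := fun j hj => h j i (Finset.mem_Iic.mp hj) hi
    have := Finset.card_le_card hsub
    rw [Fin.card_Iic] at this
    omega
  · by_contra hiS
    have hsub : S ⊆ Finset.Iio i := by
      intro j hj
      rw [Finset.mem_Iio]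
      by_contra hji
      exact hiS (h i j (le_of_not_gt hji) hj)
    have := Finset.card_le_card hsub
    rw [Fin.card_Iio] at this
    omega

lemma indicator_move {k : ℕ} (i : Fin k) (S T : Finset (Fin k)) :
    (if i ∈ S ∩ T then (1 : ℤ) else 0) + (if i ∈ S ∪ T then (1 : ℤ) else 0) =
      (if i ∈ S then (1 : ℤ) else 0) + (if i ∈ T then (1 : ℤ) else 0) := by
  by_cases hS : i ∈ S <;> by_cases hT : i ∈ T <;>
    simp [Finset.mem_inter, Finset.mem_union, hS, hT]

/-- the measure: sum of squares of cardinalities -/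
def mu {k : ℕ} (M : Multiset (Finset (Fin k))) : ℕ :=
  (M.map fun S => S.card * S.card).sum

lemma mu_le {k : ℕ} (M : Multiset (Finset (Fin k))) : mu M ≤ M.card * (k * k) := by
  have : ∀ x ∈ M.map fun S => S.card * S.card, x ≤ k * k := by
    intro x hx
    obtain ⟨S, _, rfl⟩ := Multiset.mem_map.mp hx
    have hS : S.card ≤ k := by
      simpa using Finset.card_le_univ S
    exact Nat.mul_le_mul hS hS
  have := Multiset.sum_le_card_nsmul _ _ this
  simpa [mu, smul_eq_mul] using this

lemma key_s17 {k : ℕ} : ∀ n : ℕ, ∀ M : Multiset (Finset (Fin k)),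
    M.card * (k * k) - mu M ≤ n →
    (∀ i j : Fin k, i ≤ j →
      (M.map fun S => if j ∈ S then (1 : ℤ) else 0).sum ≤
        (M.map fun S => if i ∈ S then (1 : ℤ) else 0).sum) →
    ∃ M' : Multiset (Finset (Fin k)),
      Relation.ReflTransGen RewriteStep M M' ∧ ∀ S ∈ M', IsInitialSeg S := by
  intro n
  induction n using Nat.strong_induction_on with
  | _ n ih =>
  intro M hle hdec
  · {
    by_cases hchain : ∀ S ∈ M, ∀ T ∈ M, S ⊆ T ∨ T ⊆ S
    -- chain case: every member is an initial segment
    · refine ⟨M, Relation.ReflTransGen.refl, fun S hS => ?_⟩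
      apply isInitialSeg_of_downclosed
      intro i j hij hjS
      by_contra hiS
      obtain ⟨M₀, rfl⟩ : ∃ M₀, M = S ::ₘ M₀ := ⟨M.erase S, (Multiset.cons_erase hS).symm⟩
      have hpt : ∀ T ∈ M₀, (if i ∈ T then (1 : ℤ) else 0) ≤ (if j ∈ T then (1 : ℤ) else 0) := by
        intro T hT
        by_cases hiT : i ∈ T
        · have hcmp := hchain S (Multiset.mem_cons_self _ _) T (Multiset.mem_cons_of_mem hT)
          have hST : S ⊆ T := by
            rcases hcmp with h | h
            · exact h
            · exact absurd (h hiT) hiS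
          simp [hiT, hST hjS]
        · simp [hiT]; split <;> norm_num
      have hsum : (M₀.map fun T => if i ∈ T then (1 : ℤ) else 0).sum ≤
          (M₀.map fun T => if j ∈ T then (1 : ℤ) else 0).sum := by
        apply Multiset.sum_map_le_sum_map
        exact hpt
      have := hdec i j hij
      rw [Multiset.map_cons, Multiset.map_cons, Multiset.sum_cons, Multiset.sum_cons,
        if_pos hjS, if_neg hiS] at this
      linarith
    -- non-chain case: perform a move
    · push_neg at hchain
      obtain ⟨S, hS, T, hT, hnc⟩ := hchain
      have hne : S ≠ T := by rintro rfl; exact hnc.1 (subset_refl S)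
      have hT' : T ∈ M.erase S := (Multiset.mem_erase_of_ne (Ne.symm hne)).mpr hT
      obtain ⟨M₀, hM₀⟩ : ∃ M₀, M = S ::ₘ T ::ₘ M₀ :=
        ⟨(M.erase S).erase T, by rw [Multiset.cons_erase hT', Multiset.cons_erase hS]⟩
      set M₁ : Multiset (Finset (Fin k)) := (S ∩ T) ::ₘ (S ∪ T) ::ₘ M₀ with hM₁
      have hstep : RewriteStep M M₁ := ⟨S, T, M₀, hM₀, rfl⟩
      -- sums preserved
      have hsums : ∀ i : Fin k, (M₁.map fun U => if i ∈ U then (1 : ℤ) else 0).sum =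
          (M.map fun U => if i ∈ U then (1 : ℤ) else 0).sum := by
        intro i
        rw [hM₀, hM₁]
        simp only [Multiset.map_cons, Multiset.sum_cons]
        rw [← add_assoc, ← add_assoc, indicator_move]
      have hdec₁ : ∀ i j : Fin k, i ≤ j →
          (M₁.map fun U => if j ∈ U then (1 : ℤ) else 0).sum ≤
            (M₁.map fun U => if i ∈ U then (1 : ℤ) else 0).sum := by
        intro i j hij
        rw [hsums i, hsums j]
        exact hdec i j hij
      -- measure increases strictly
      have hcardi : (S ∩ T).card < S.card :=
        Finset.card_lt_card ⟨Finset.inter_subset_left, fun h => hnc.1 fun x hx =>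
          (Finset.mem_inter.mp (h hx)).2⟩
      have hcardi' : (S ∩ T).card < T.card :=
        Finset.card_lt_card ⟨Finset.inter_subset_right, fun h => hnc.2 fun x hx =>
          (Finset.mem_inter.mp (h hx)).1⟩
      have hcards : (S ∩ T).card + (S ∪ T).card = S.card + T.card :=
        Finset.card_inter_add_card_union S T
      have hmu : mu M < mu M₁ := by
        rw [hM₀, hM₁, mu, mu]
        simp only [Multiset.map_cons, Multiset.sum_cons]
        have : S.card * S.card + T.card * T.card <
            (S ∩ T).card * (S ∩ T).card + (S ∪ T).card * (S ∪ T).card := by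
          nlinarith [hcardi, hcardi', hcards]
        omega
      have hcard₁ : M₁.card = M.card := by rw [hM₀, hM₁]; simp
      have hbound : mu M₁ ≤ M₁.card * (k * k) := mu_le M₁
      rw [hcard₁] at hbound
      have hlt : M₁.card * (k * k) - mu M₁ < n := by
        rw [hcard₁]
        omega
      obtain ⟨M', hM', hinit⟩ := ih _ hlt M₁ le_rfl hdec₁
      exact ⟨M', Relation.ReflTransGen.head hstep hM', hinit⟩
  }

/-- If the sum `η = Σ ι_{S_j}` of the indicator vectors of a finite multiset of subsets
of `[k]` has weakly decreasing coordinates, then finitely many rewriting moves transform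
the multiset into one consisting entirely of initial intervals. -/
theorem stmt17 {k : ℕ} (M : Multiset (Finset (Fin k)))
    (hdec : ∀ i j : Fin k, i ≤ j →
      (M.map fun S => if j ∈ S then (1 : ℤ) else 0).sum ≤
        (M.map fun S => if i ∈ S then (1 : ℤ) else 0).sum) :
    ∃ M' : Multiset (Finset (Fin k)),
      Relation.ReflTransGen RewriteStep M M' ∧ ∀ S ∈ M', IsInitialSeg S := by
  exact key_s17 (M.card * (k * k) - mu M) M le_rfl hdec
end
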